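/- Let n ≥ 2 and let a_1, …, a_n be positive real numbers. Then there exist unique positive real numbers b_1, …, b_n such that for every i, a_i = (n-1)! · ∏_{j ≠ i} b_j. -/

import Mathlib

/-- For `n ≥ 2` and positive reals `a_1, …, a_n`, there exist unique
positive reals `b_1, …, b_n` with `a_i = (n-1)! · ∏_{j ≠ i} b_j` for every `i`. -/
theorem stmt_0 (n : ℕ) (hn : 2 ≤ n) (a : Fin n → ℝ) (ha : ∀ i, 0 < a i) :
    ∃! b : Fin n → ℝ, (∀ i, 0 < b i) ∧
      ∀ i, a i = (Nat.factorial (n - 1) : ℝ) * ∏ j ∈ Finset.univ.erase i, b j := by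
  have hn1 : n - 1 ≠ 0 := by omega
  set c : ℝ := (Nat.factorial (n-1) : ℝ) with hc
  have hcpos : 0 < c := Nat.cast_pos.mpr (Nat.factorial_pos _)
  set A : ℝ := ∏ i, a i with hA
  have hApos : 0 < A := Finset.prod_pos (fun i _ => ha i)
  set P : ℝ := (A / c^n) ^ (((n-1 : ℕ) : ℝ))⁻¹ with hPdef
  have hPpos : 0 < P := Real.rpow_pos_of_pos (by positivity) _
  have hPpow : P ^ (n-1) = A / c^n := by
    rw [hPdef, ← Real.rpow_natCast ((A/c^n) ^ _), ← Real.rpow_mul (by positivity),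
      inv_mul_cancel₀ (by exact_mod_cast hn1), Real.rpow_one]
  have hAP : A = c^n * P^(n-1) := by rw [hPpow]; field_simp
  have hPn : P^n = P^(n-1) * P := by rw [← pow_succ]; congr 1; omega
  -- key: any solution b' satisfies b' i = c * P / a i
  have key : ∀ b' : Fin n → ℝ, (∀ i, 0 < b' i) →
      (∀ i, a i = c * ∏ j ∈ Finset.univ.erase i, b' j) →
      ∀ i, b' i = c * P / a i := by
    intro b' hb' heq i
    set Q : ℝ := ∏ j, b' j with hQ
    have hQpos : 0 < Q := Finset.prod_pos (fun i _ => hb' i)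
    have hmul : ∀ i, a i * b' i = c * Q := by
      intro i
      have h1 : (∏ j ∈ Finset.univ.erase i, b' j) * b' i = Q :=
        Finset.prod_erase_mul _ _ (Finset.mem_univ i)
      rw [heq i, mul_assoc, h1]
    have hAQ : A * Q = c^n * Q^n := by
      calc A * Q = ∏ i, (a i * b' i) := (Finset.prod_mul_distrib).symm
        _ = ∏ _i : Fin n, (c * Q) := Finset.prod_congr rfl (fun i _ => hmul i)
        _ = (c * Q)^n := by rw [Finset.prod_const, Finset.card_univ, Fintype.card_fin]
        _ = c^n * Q^n := mul_pow _ _ _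
    have hQn : Q^n = Q^(n-1) * Q := by rw [← pow_succ]; congr 1; omega
    have hAQ' : A = c^n * Q^(n-1) := by
      apply mul_right_cancel₀ hQpos.ne'
      rw [hAQ, hQn]; ring
    have hQpow : Q ^ (n-1) = A / c^n := by
      rw [hAQ']; field_simp
    have hQP : Q = P := by
      have h := (Real.pow_rpow_inv_natCast hQpos.le hn1).symm
      rw [hQpow, ← hPdef] at h
      exact h
    rw [eq_div_iff (ha i).ne', mul_comm (b' i) (a i), hmul i, hQP]
  refine ⟨fun i => c * P / a i, ⟨fun i => div_pos (mul_pos hcpos hPpos) (ha i), ?_⟩, ?_⟩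
  · intro i
    have hprodb : ∏ j, (c * P / a j) = c^n * P^n / A := by
      rw [Finset.prod_div_distrib, Finset.prod_const, Finset.card_univ,
        Fintype.card_fin, mul_pow, hA]
    have h1 : (∏ j ∈ Finset.univ.erase i, (c * P / a j)) * (c * P / a i)
        = c^n * P^n / A := by
      rw [Finset.prod_erase_mul _ _ (Finset.mem_univ i)]; exact hprodb
    have hbne : (c * P / a i) ≠ 0 := (div_pos (mul_pos hcpos hPpos) (ha i)).ne'
    apply mul_right_cancel₀ hbne
    rw [mul_assoc, h1]
    rw [hPn, hAP]
    field_simp [(ha i).ne']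
  · intro b' ⟨hb', heq⟩
    funext i
    exact key b' hb' heq i
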